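/- With z_t(k) the one-dimensional OU process with q_k² ≤ C₀|k|^{2γ}, for every h ∈ [0,1] there is a constant C such that E[|z_t(k) − z_s(k)|²] ≤ C · |t − s|^h · |k|^{−(2 − 2γ − 2h)} for all 0 ≤ s ≤ t and nonzero integers k. -/

import Mathlib

open MeasureTheory Real

lemma aux_integrable_mul {Ω : Type*} [MeasurableSpace Ω] {P : Measure Ω}
    {f g : Ω → ℝ} (hf : MemLp f 2 P) (hg : MemLp g 2 P) :
    Integrable (fun ω => f ω * g ω) P := by
  have h1 := (hf.add hg).integrable_sq
  have h2 := hf.integrable_sq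
  have h3 := hg.integrable_sq
  have heq : (fun ω => f ω * g ω) =
      fun ω => (((f + g) ω) ^ 2 - f ω ^ 2 - g ω ^ 2) / 2 := by
    funext ω; simp only [Pi.add_apply]; ring
  rw [heq]
  exact ((h1.sub h2).sub h3).div_const 2

lemma aux_one_sub_exp_le_rpow {x h : ℝ} (hx : 0 ≤ x) (h0 : 0 ≤ h) (h1 : h ≤ 1) :
    1 - Real.exp (-x) ≤ x ^ h := by
  rcases le_total x 1 with hx1 | hx1
  · rcases eq_or_lt_of_le hx with rfl | hxpos
    · simpa using Real.rpow_nonneg le_rfl h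
    · calc 1 - Real.exp (-x) ≤ x := by nlinarith [Real.add_one_le_exp (-x)]
        _ = x ^ (1 : ℝ) := (Real.rpow_one x).symm
        _ ≤ x ^ h := Real.rpow_le_rpow_of_exponent_ge hxpos hx1 h1
  · calc 1 - Real.exp (-x) ≤ 1 := by nlinarith [Real.exp_pos (-x)]
      _ = (1 : ℝ) ^ h := (Real.one_rpow h).symm
      _ ≤ x ^ h := Real.rpow_le_rpow zero_le_one hx1 h0

/-- Temporal regularity of the OU process: if `q_k² ≤ C₀|k|^{2γ}` and the
covariance satisfies the OU formula, then for every `h ∈ [0,1]` there is `C`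
with `E[(z_t(k) - z_s(k))²] ≤ C (t-s)^h |k|^{-(2-2γ-2h)}` for `0 ≤ s ≤ t`. -/
theorem stmt_9 {Ω : Type*} [MeasurableSpace Ω] (P : Measure Ω) [IsProbabilityMeasure P]
    (γ C₀ : ℝ) (hC₀ : 0 < C₀) (z : ℤ → ℝ → Ω → ℝ) (q : ℤ → ℝ)
    (hq : ∀ k : ℤ, k ≠ 0 → (q k) ^ 2 ≤ C₀ * |(k : ℝ)| ^ (2 * γ))
    (hmem : ∀ k t, MemLp (z k t) 2 P)
    (hcov : ∀ k : ℤ, k ≠ 0 → ∀ s t : ℝ, 0 ≤ s → 0 ≤ t →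
      ∫ ω, z k s ω * z k t ω ∂P = ((q k) ^ 2 / (2 * (k : ℝ) ^ 2)) *
        (Real.exp (-(k : ℝ) ^ 2 * |t - s|) - Real.exp (-(k : ℝ) ^ 2 * (t + s)))) :
    ∀ h : ℝ, 0 ≤ h → h ≤ 1 →
      ∃ C : ℝ, 0 < C ∧ ∀ k : ℤ, k ≠ 0 → ∀ s t : ℝ, 0 ≤ s → s ≤ t →
        ∫ ω, (z k t ω - z k s ω) ^ 2 ∂P ≤
          C * (t - s) ^ h * |(k : ℝ)| ^ (-(2 - 2 * γ - 2 * h)) := by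
  intro h h0 h1
  refine ⟨C₀, hC₀, ?_⟩
  intro k hk s t hs hst
  have ht : 0 ≤ t := hs.trans hst
  set kr : ℝ := (k : ℝ) with hkr
  have hkrne : kr ≠ 0 := by
    simp only [hkr, ne_eq, Int.cast_eq_zero]; exact hk
  have hk2 : (0 : ℝ) < kr ^ 2 := by positivity
  have hb : (0 : ℝ) < |kr| := abs_pos.mpr hkrne
  -- expand the square
  have itt := aux_integrable_mul (hmem k t) (hmem k t)
  have iss := aux_integrable_mul (hmem k s) (hmem k s)
  have ist := aux_integrable_mul (hmem k s) (hmem k t)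
  have hexp : ∫ ω, (z k t ω - z k s ω) ^ 2 ∂P =
      (∫ ω, z k t ω * z k t ω ∂P) + (∫ ω, z k s ω * z k s ω ∂P)
        - 2 * ∫ ω, z k s ω * z k t ω ∂P := by
    have : (fun ω => (z k t ω - z k s ω) ^ 2) =
        fun ω => (z k t ω * z k t ω + z k s ω * z k s ω) - 2 * (z k s ω * z k t ω) := by
      funext ω; ring
    have iadd : Integrable (fun ω => z k t ω * z k t ω + z k s ω * z k s ω) P := itt.add iss
    rw [this, integral_sub iadd (ist.const_mul 2), integral_add itt iss, MeasureTheory.integral_const_mul]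
  have ctt := hcov k hk t t ht ht
  have css := hcov k hk s s hs hs
  have cst := hcov k hk s t hs ht
  rw [sub_self, abs_zero] at ctt css
  rw [abs_of_nonneg (by linarith : (0:ℝ) ≤ t - s)] at cst
  set u := Real.exp (-kr ^ 2 * t) with hu
  set v := Real.exp (-kr ^ 2 * s) with hv
  set a := Real.exp (-kr ^ 2 * (t - s)) with ha
  have hett : Real.exp (-kr ^ 2 * (t + t)) = u * u := by
    rw [hu, ← Real.exp_add]; ring_nf
  have hess : Real.exp (-kr ^ 2 * (s + s)) = v * v := by
    rw [hv, ← Real.exp_add]; ring_nf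
  have hets : Real.exp (-kr ^ 2 * (t + s)) = u * v := by
    rw [hu, hv, ← Real.exp_add]; ring_nf
  rw [hett] at ctt
  rw [hess] at css
  rw [hets] at cst
  have hqnn : (0 : ℝ) ≤ (q k) ^ 2 := sq_nonneg _
  -- key bound: E ≤ q² / kr² * (1 - a)
  have key : ∫ ω, (z k t ω - z k s ω) ^ 2 ∂P ≤ (q k) ^ 2 / kr ^ 2 * (1 - a) := by
    rw [hexp, ctt, css, cst]
    simp only [mul_zero, Real.exp_zero]
    have huv : 0 ≤ (u - v) ^ 2 := sq_nonneg _
    have hA : (0 : ℝ) ≤ (q k) ^ 2 / (2 * kr ^ 2) := by positivity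
    have : (q k) ^ 2 / (2 * kr ^ 2) * (1 - u * u) + (q k) ^ 2 / (2 * kr ^ 2) * (1 - v * v)
        - 2 * ((q k) ^ 2 / (2 * kr ^ 2) * (a - u * v))
        ≤ (q k) ^ 2 / (2 * kr ^ 2) * (2 * (1 - a)) := by nlinarith
    calc _ ≤ (q k) ^ 2 / (2 * kr ^ 2) * (2 * (1 - a)) := this
      _ = (q k) ^ 2 / kr ^ 2 * (1 - a) := by field_simp
  -- bound 1 - a
  have hbound : 1 - a ≤ (kr ^ 2 * (t - s)) ^ h := by
    rw [ha]
    have : -kr ^ 2 * (t - s) = -(kr ^ 2 * (t - s)) := by ring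
    rw [this]
    exact aux_one_sub_exp_le_rpow (by nlinarith) h0 h1
  have hxnn : (0 : ℝ) ≤ t - s := by linarith
  have step2 : (q k) ^ 2 / kr ^ 2 * (1 - a) ≤ (q k) ^ 2 / kr ^ 2 * ((kr ^ 2) ^ h * (t - s) ^ h) := by
    rw [← Real.mul_rpow (le_of_lt hk2) hxnn]
    exact mul_le_mul_of_nonneg_left hbound (by positivity)
  -- rewrite powers as powers of |kr|
  have hkr2 : kr ^ 2 = |kr| ^ (2 : ℝ) := by
    rw [Real.rpow_two, sq_abs]
  have hpow : (q k) ^ 2 / kr ^ 2 * ((kr ^ 2) ^ h * (t - s) ^ h)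
      = (q k) ^ 2 * (t - s) ^ h * |kr| ^ (2 * h - 2) := by
    rw [hkr2, ← Real.rpow_mul (le_of_lt hb), Real.rpow_sub hb]
    field_simp
  have final : (q k) ^ 2 * (t - s) ^ h * |kr| ^ (2 * h - 2)
      ≤ C₀ * (t - s) ^ h * |kr| ^ (-(2 - 2 * γ - 2 * h)) := by
    have h' := hq k hk
    have hexpadd : |kr| ^ (2 * γ) * |kr| ^ (2 * h - 2) = |kr| ^ (-(2 - 2 * γ - 2 * h)) := by
      rw [← Real.rpow_add hb]; ring_nf
    calc (q k) ^ 2 * (t - s) ^ h * |kr| ^ (2 * h - 2)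
        ≤ C₀ * |kr| ^ (2 * γ) * (t - s) ^ h * |kr| ^ (2 * h - 2) := by
          apply mul_le_mul_of_nonneg_right _ (by positivity)
          exact mul_le_mul_of_nonneg_right h' (by positivity)
      _ = C₀ * (t - s) ^ h * (|kr| ^ (2 * γ) * |kr| ^ (2 * h - 2)) := by ring
      _ = C₀ * (t - s) ^ h * |kr| ^ (-(2 - 2 * γ - 2 * h)) := by rw [hexpadd]
  calc ∫ ω, (z k t ω - z k s ω) ^ 2 ∂P ≤ (q k) ^ 2 / kr ^ 2 * (1 - a) := key
    _ ≤ (q k) ^ 2 / kr ^ 2 * ((kr ^ 2) ^ h * (t - s) ^ h) := step2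
    _ = (q k) ^ 2 * (t - s) ^ h * |kr| ^ (2 * h - 2) := hpow
    _ ≤ C₀ * (t - s) ^ h * |kr| ^ (-(2 - 2 * γ - 2 * h)) := final
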